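/- arXiv:2009.02145 — 2 statements merged into one kernel-verified Lean document; each statement's English description precedes it below -/
import Mathlib

section
/- Let f, g ∈ L_1 + L_∞ on (0,∞) be such that f = μ(f), g = μ(g) and g ≺≺_hd f. Then there exists a collection {Δ_k}_{k≥0} of pairwise disjoint measurable subsets of (0,∞) such that: (i) for every k, ∫_{Δ_k} g = ∫_{Δ_k} f and g·χ_{Δ_k} ≺≺_hd f·χ_{Δ_k} (i.e. the restriction of g to Δ_k is head-majorized with equal integrals by the restriction of f); (ii) g ≤ f on the complement of ∪_{k≥0} Δ_k. -/
open MeasureTheory ENNReal Set Filter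

noncomputable section

namespace CSZ

/-- Lebesgue measure on the half line `(0,∞)`. -/
def m0 : Measure ℝ := volume.restrict (Set.Ioi (0:ℝ))

/-- The right-continuous decreasing rearrangement `μ(t,f)` of a function on `(0,∞)`:
`μ(t,f) = inf {s ≥ 0 : m({|f| > s}) ≤ t}`. -/
def mu (f : ℝ → ℝ) (t : ℝ) : ℝ :=
  sInf {s : ℝ | 0 ≤ s ∧ m0 {x | s < |f x|} ≤ ENNReal.ofReal t}

/-- Head majorization `g ≺≺_hd f` : `∫_0^t μ(s,g) ds ≤ ∫_0^t μ(s,f) ds` for all `t > 0`. -/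
def HeadMaj (g f : ℝ → ℝ) : Prop :=
  ∀ t : ℝ, 0 < t →
    ∫⁻ s in Set.Ioc (0:ℝ) t, ENNReal.ofReal (mu g s) ≤
      ∫⁻ s in Set.Ioc (0:ℝ) t, ENNReal.ofReal (mu f s)

/-- Tail majorization `g ≺≺_tl f` : `∫_t^∞ μ(s,g) ds ≤ ∫_t^∞ μ(s,f) ds` for all `t > 0`. -/
def TailMaj (g f : ℝ → ℝ) : Prop :=
  ∀ t : ℝ, 0 < t →
    ∫⁻ s in Set.Ioi t, ENNReal.ofReal (mu g s) ≤
      ∫⁻ s in Set.Ioi t, ENNReal.ofReal (mu f s)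

/-- The space `L_p(0,∞)`, `0 < p < ∞`. -/
def LpS (p : ℝ) : Set (ℝ → ℝ) :=
  {f | Measurable f ∧ ∫⁻ x, ENNReal.ofReal (|f x| ^ p) ∂m0 < ⊤}

/-- The `L_p`-norm. -/
def LpNorm (p : ℝ) (f : ℝ → ℝ) : ℝ :=
  ((∫⁻ x, ENNReal.ofReal (|f x| ^ p) ∂m0) ^ (1/p)).toReal

/-- The space `L_∞(0,∞)`. -/
def LinftyS : Set (ℝ → ℝ) :=
  {f | Measurable f ∧ ∃ C : ℝ, ∀ᵐ x ∂m0, |f x| ≤ C}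

/-- The `L_∞`-norm (essential supremum). -/
def LinftyNorm (f : ℝ → ℝ) : ℝ :=
  (essSup (fun x => ENNReal.ofReal |f x|) m0).toReal

/-- The space `L_0(0,∞)` of measurable functions with support of finite measure. -/
def L0S : Set (ℝ → ℝ) :=
  {f | Measurable f ∧ m0 (Function.support f) < ⊤}

/-- The group "norm" on `L_0` : `‖f‖_0 = m(supp f)`. -/
def L0Norm (f : ℝ → ℝ) : ℝ := (m0 (Function.support f)).toReal

/-- The sum `X + Y` of two sets of functions. -/
def sumSet (X Y : Set (ℝ → ℝ)) : Set (ℝ → ℝ) :=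
  {f | ∃ g ∈ X, ∃ h ∈ Y, f = g + h}

/-- A quasi-Banach function space on `(0,∞)` : a linear space of measurable functions,
equipped with a complete quasi-norm, such that `f ∈ E`, `g` measurable and `|g| ≤ |f|`
imply `g ∈ E` and `‖g‖_E ≤ ‖f‖_E`. -/
structure QBFS where
  carrier : Set (ℝ → ℝ)
  qnorm : (ℝ → ℝ) → ℝ
  measurable_mem : ∀ f ∈ carrier, Measurable f
  zero_mem : (0 : ℝ → ℝ) ∈ carrier
  add_mem : ∀ f ∈ carrier, ∀ g ∈ carrier, f + g ∈ carrier
  smul_mem : ∀ (c : ℝ), ∀ f ∈ carrier, c • f ∈ carrier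
  qnorm_nonneg : ∀ f, 0 ≤ qnorm f
  qnorm_eq_zero : ∀ f ∈ carrier, qnorm f = 0 → f = 0
  qnorm_smul : ∀ (c : ℝ) (f : ℝ → ℝ), qnorm (c • f) = |c| * qnorm f
  quasi_triangle : ∃ C : ℝ, 1 ≤ C ∧ ∀ f g, qnorm (f + g) ≤ C * (qnorm f + qnorm g)
  ideal : ∀ f ∈ carrier, ∀ g : ℝ → ℝ, Measurable g →
    (∀ x, |g x| ≤ |f x|) → g ∈ carrier ∧ qnorm g ≤ qnorm f
  complete : ∀ u : ℕ → ℝ → ℝ, (∀ n, u n ∈ carrier) →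
    (∀ ε : ℝ, 0 < ε → ∃ N : ℕ, ∀ j ≥ N, ∀ k ≥ N, qnorm (u j - u k) < ε) →
    ∃ f ∈ carrier, ∀ ε : ℝ, 0 < ε → ∃ N : ℕ, ∀ n ≥ N, qnorm (u n - f) < ε

/-- `T` is linear on the subspace `S`. -/
def IsLinearOn (T : (ℝ → ℝ) → (ℝ → ℝ)) (S : Set (ℝ → ℝ)) : Prop :=
  (∀ f ∈ S, ∀ g ∈ S, T (f + g) = T f + T g) ∧
  (∀ (c : ℝ), ∀ f ∈ S, T (c • f) = c • T f)

/-- `T` maps `X` into `X` with bound `M` for the (quasi-)norm `N`. -/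
def BoundedWith (T : (ℝ → ℝ) → (ℝ → ℝ)) (X : Set (ℝ → ℝ)) (N : (ℝ → ℝ) → ℝ) (M : ℝ) :
    Prop :=
  ∀ f ∈ X, T f ∈ X ∧ N (T f) ≤ M * N f

/-- `T` maps `X` into `X` boundedly for the (quasi-)norm `N`. -/
def BoundedOn (T : (ℝ → ℝ) → (ℝ → ℝ)) (X : Set (ℝ → ℝ)) (N : (ℝ → ℝ) → ℝ) : Prop :=
  ∃ M : ℝ, 0 ≤ M ∧ BoundedWith T X N M

/-- `(E, NE)` is an interpolation space for the couple `((X,NX), (Y,NY))` :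
`X ∩ Y ⊆ E ⊆ X + Y` and every linear operator on `X + Y` which is bounded from `X` to `X`
and from `Y` to `Y` maps `E` into `E` boundedly. -/
def IsInterpolation (X Y : Set (ℝ → ℝ)) (NX NY : (ℝ → ℝ) → ℝ)
    (E : Set (ℝ → ℝ)) (NE : (ℝ → ℝ) → ℝ) : Prop :=
  X ∩ Y ⊆ E ∧ E ⊆ sumSet X Y ∧
  ∀ T : (ℝ → ℝ) → (ℝ → ℝ),
    IsLinearOn T (sumSet X Y) →
    (∀ f ∈ sumSet X Y, T f ∈ sumSet X Y) →
    BoundedOn T X NX → BoundedOn T Y NY →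
    BoundedOn T E NE

end CSZ

namespace CSZ

/-- `f` coincides with its decreasing rearrangement:
`f` is nonnegative, decreasing on `(0,∞)` and right-continuous. -/
def ShapeDR (f : ℝ → ℝ) : Prop :=
  (∀ x, 0 ≤ f x) ∧ AntitoneOn f (Set.Ioi 0) ∧
    ∀ x ∈ Set.Ioi (0:ℝ), ContinuousWithinAt f (Set.Ici x) x

end CSZ

namespace S13

open Topology Filter

open CSZ

/-- The measure with density `χ_{(0,∞)}·h` (for the relevant nonnegative part). -/
def nu (h : ℝ → ℝ) : Measure ℝ :=
  volume.withDensity ((Set.Ioi (0:ℝ)).indicator (fun x => ENNReal.ofReal (h x)))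

lemma nu_apply (h : ℝ → ℝ) {s : Set ℝ} (hs : MeasurableSet s) :
    nu h s = ∫⁻ x in s ∩ Set.Ioi 0, ENNReal.ofReal (h x) := by
  rw [nu, withDensity_apply _ hs, lintegral_indicator measurableSet_Ioi,
    Measure.restrict_restrict measurableSet_Ioi, Set.inter_comm]

lemma nu_apply' (h : ℝ → ℝ) {s : Set ℝ} (hs : MeasurableSet s) (hsub : s ⊆ Set.Ioi 0) :
    nu h s = ∫⁻ x in s, ENNReal.ofReal (h x) := by
  rw [nu_apply h hs, Set.inter_eq_left.mpr hsub]

lemma nu_apply_m0 (h : ℝ → ℝ) {s : Set ℝ} (hs : MeasurableSet s) (hsub : s ⊆ Set.Ioi 0) :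
    nu h s = ∫⁻ x in s, ENNReal.ofReal (h x) ∂m0 := by
  rw [nu_apply h hs, m0]
  rw [show (volume.restrict (Set.Ioi (0:ℝ))).restrict s = volume.restrict (s ∩ Set.Ioi 0) from
    Measure.restrict_restrict hs]

lemma nu_Iic (h : ℝ → ℝ) (t : ℝ) :
    nu h (Set.Iic t) = ∫⁻ x in Set.Ioc 0 t, ENNReal.ofReal (h x) := by
  rw [nu_apply h measurableSet_Iic, Set.inter_comm, Set.Ioi_inter_Iic]

lemma nu_Iic_nonpos (h : ℝ → ℝ) {t : ℝ} (ht : t ≤ 0) : nu h (Set.Iic t) = 0 := by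
  rw [nu_Iic, Set.Ioc_eq_empty (by linarith), Measure.restrict_empty, lintegral_zero_measure]

lemma nu_singleton (h : ℝ → ℝ) (b : ℝ) : nu h {b} = 0 := by
  rw [nu_apply h (measurableSet_singleton b)]
  exact setLIntegral_measure_zero _ _
    (measure_mono_null Set.inter_subset_left Real.volume_singleton)

lemma nu_Iic_ne_top {h : ℝ → ℝ} (hh : h ∈ sumSet (LpS 1) LinftyS) (t : ℝ) :
    nu h (Set.Iic t) ≠ ⊤ := by
  obtain ⟨p, hp, q, hq, rfl⟩ := hh
  obtain ⟨C, hC⟩ := hq.2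
  rw [nu_Iic]
  have hres : (volume.restrict (Set.Ioc (0:ℝ) t)) = m0.restrict (Set.Ioc 0 t) := by
    rw [m0, Measure.restrict_restrict measurableSet_Ioc,
      Set.inter_eq_left.mpr Set.Ioc_subset_Ioi_self]
  have hb : ∀ x : ℝ, ENNReal.ofReal ((p + q) x) ≤
      ENNReal.ofReal |p x| + ENNReal.ofReal |q x| := by
    intro x
    rw [← ENNReal.ofReal_add (abs_nonneg _) (abs_nonneg _)]
    exact ENNReal.ofReal_le_ofReal
      (by simpa using add_le_add (le_abs_self (p x)) (le_abs_self (q x)))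
  have h1 : ∫⁻ x in Set.Ioc (0:ℝ) t, ENNReal.ofReal |p x| ≠ ⊤ := by
    rw [hres]
    refine ne_top_of_le_ne_top ?_ (lintegral_mono' Measure.restrict_le_self le_rfl)
    have := hp.2
    simp only [Real.rpow_one] at this
    exact this.ne
  have h2 : ∫⁻ x in Set.Ioc (0:ℝ) t, ENNReal.ofReal |q x| ≠ ⊤ := by
    rw [hres]
    have : ∫⁻ x in Set.Ioc (0:ℝ) t, ENNReal.ofReal |q x| ∂m0 ≤
        ∫⁻ _ in Set.Ioc (0:ℝ) t, ENNReal.ofReal C ∂m0 := by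
      refine lintegral_mono_ae ?_
      exact (ae_restrict_of_ae (hC.mono fun x hx => ENNReal.ofReal_le_ofReal hx))
    refine ne_top_of_le_ne_top ?_ this
    rw [setLIntegral_const]
    refine ENNReal.mul_ne_top ENNReal.ofReal_ne_top ?_
    have : m0 (Set.Ioc 0 t) ≤ volume (Set.Ioc 0 t) := by
      rw [m0, Measure.restrict_apply measurableSet_Ioc]
      exact measure_mono Set.inter_subset_left
    exact ne_top_of_le_ne_top (by rw [Real.volume_Ioc]; exact ENNReal.ofReal_ne_top) this
  refine ne_top_of_le_ne_top (ENNReal.add_ne_top.mpr ⟨h1, h2⟩) ?_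
  calc ∫⁻ x in Set.Ioc (0:ℝ) t, ENNReal.ofReal ((p + q) x)
      ≤ ∫⁻ x in Set.Ioc (0:ℝ) t, (ENNReal.ofReal |p x| + ENNReal.ofReal |q x|) :=
        lintegral_mono hb
    _ = (∫⁻ x in Set.Ioc (0:ℝ) t, ENNReal.ofReal |p x|)
        + ∫⁻ x in Set.Ioc (0:ℝ) t, ENNReal.ofReal |q x| :=
        lintegral_add_left (hp.1.abs.ennreal_ofReal) _

lemma measurable_of_mem {h : ℝ → ℝ} (hh : h ∈ sumSet (LpS 1) LinftyS) : Measurable h := by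
  obtain ⟨p, hp, q, hq, rfl⟩ := hh
  exact hp.1.add hq.1

/-- cumulative distribution function of `nu h`. -/
def cdf (h : ℝ → ℝ) : ℝ → ℝ := fun t => (nu h (Set.Iic t)).toReal

lemma nu_Ioc_ne_top {h : ℝ → ℝ} (hfin : ∀ t, nu h (Set.Iic t) ≠ ⊤) (a b : ℝ) :
    nu h (Set.Ioc a b) ≠ ⊤ :=
  ne_top_of_le_ne_top (hfin b) (measure_mono Set.Ioc_subset_Iic_self)

lemma nu_Iic_add_Ioc (h : ℝ → ℝ) {a b : ℝ} (hab : a ≤ b) :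
    nu h (Set.Iic a) + nu h (Set.Ioc a b) = nu h (Set.Iic b) := by
  rw [← measure_union (Set.Iic_disjoint_Ioc le_rfl) measurableSet_Ioc,
    Set.Iic_union_Ioc_eq_Iic hab]

lemma cdf_Ioc {h : ℝ → ℝ} (hfin : ∀ t, nu h (Set.Iic t) ≠ ⊤) {a b : ℝ} (hab : a ≤ b) :
    (nu h (Set.Ioc a b)).toReal = cdf h b - cdf h a := by
  have h2 := nu_Iic_add_Ioc h hab
  have h1 : nu h (Set.Ioc a b) ≠ ⊤ := nu_Ioc_ne_top hfin a b
  rw [cdf, cdf, ← h2, ENNReal.toReal_add (hfin a) h1]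
  ring

lemma cdf_mono {h : ℝ → ℝ} (hfin : ∀ t, nu h (Set.Iic t) ≠ ⊤) : Monotone (cdf h) :=
  fun a b hab => ENNReal.toReal_mono (hfin b) (measure_mono (Set.Iic_subset_Iic.2 hab))


lemma cdf_continuous {h : ℝ → ℝ} (hfin : ∀ t, nu h (Set.Iic t) ≠ ⊤) :
    Continuous (cdf h) := by
  rw [Metric.continuous_iff]
  intro t ε hε
  have hiInter : (⋂ n : ℕ, Set.Ioc (t - 1/(n+1)) (t + 1/(n+1))) = {t} := by
    apply Set.eq_singleton_iff_unique_mem.mpr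
    constructor
    · refine Set.mem_iInter.mpr fun n => ?_
      have hp : (0:ℝ) < 1/(n+1) := by positivity
      exact Set.mem_Ioc.mpr ⟨by linarith, by linarith⟩
    · intro x hx
      have hx' : ∀ n : ℕ, t - 1/(n+1) < x ∧ x ≤ t + 1/(n+1) := by
        intro n
        exact Set.mem_Ioc.mp (Set.mem_iInter.mp hx n)
      have h1 : x ≤ t := by
        by_contra hc
        push_neg at hc
        obtain ⟨n, hn⟩ := exists_nat_one_div_lt (sub_pos.mpr hc)
        linarith [(hx' n).2, hn]
      have h2 : t ≤ x := by
        by_contra hc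
        push_neg at hc
        obtain ⟨n, hn⟩ := exists_nat_one_div_lt (sub_pos.mpr hc)
        linarith [(hx' n).1, hn]
      exact le_antisymm h1 h2
  have htend : Tendsto (fun n : ℕ => nu h (Set.Ioc (t - 1/(n+1)) (t + 1/(n+1))))
      atTop (𝓝 0) := by
    have hmono : Antitone (fun n : ℕ => Set.Ioc (t - 1/(n+1)) (t + 1/(n+1))) := by
      intro n m hnm x hxm
      have hle : 1/((m:ℝ)+1) ≤ 1/((n:ℝ)+1) := by
        apply one_div_le_one_div_of_le
        · positivity
        · have := (Nat.cast_le (α := ℝ)).mpr hnm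
          linarith
      rcases Set.mem_Ioc.mp hxm with ⟨hx1, hx2⟩
      exact Set.mem_Ioc.mpr ⟨by linarith, by linarith⟩
    have hf : ∃ n : ℕ, nu h (Set.Ioc (t - 1/(n+1)) (t + 1/(n+1))) ≠ ⊤ :=
      ⟨0, nu_Ioc_ne_top hfin _ _⟩
    have := tendsto_measure_iInter_atTop (μ := nu h)
      (fun n => measurableSet_Ioc.nullMeasurableSet) hmono hf
    rw [hiInter, nu_singleton] at this
    exact this
  obtain ⟨n, hn⟩ := (htend.eventually (gt_mem_nhds (ENNReal.ofReal_pos.2 hε))).exists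
  have hδ : (0:ℝ) < 1/(n+1) := by positivity
  refine ⟨1/(n+1), hδ, fun s hst => ?_⟩
  rw [Real.dist_eq] at hst ⊢
  rcases le_total s t with hc | hc
  · have habs0 : t - s < 1/(n+1) := by
      have : |s - t| = t - s := by rw [abs_sub_comm]; exact abs_of_nonneg (by linarith)
      linarith [this ▸ hst]
    have hsub : Set.Ioc s t ⊆ Set.Ioc (t - 1/(n+1)) (t + 1/(n+1)) := by
      intro x hx
      rcases Set.mem_Ioc.mp hx with ⟨hx1, hx2⟩
      exact Set.mem_Ioc.mpr ⟨by linarith, by linarith⟩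
    have habs : |cdf h s - cdf h t| = (nu h (Set.Ioc s t)).toReal := by
      have := cdf_mono hfin hc
      rw [abs_of_nonpos (by linarith), cdf_Ioc hfin hc]
      ring
    rw [habs]
    exact ENNReal.toReal_lt_of_lt_ofReal (lt_of_le_of_lt (measure_mono hsub) hn)
  · have habs0 : s - t < 1/(n+1) := by
      have : |s - t| = s - t := abs_of_nonneg (by linarith)
      linarith [this ▸ hst]
    have hsub : Set.Ioc t s ⊆ Set.Ioc (t - 1/(n+1)) (t + 1/(n+1)) := by
      intro x hx
      rcases Set.mem_Ioc.mp hx with ⟨hx1, hx2⟩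
      exact Set.mem_Ioc.mpr ⟨by linarith, by linarith⟩
    have habs : |cdf h s - cdf h t| = (nu h (Set.Ioc t s)).toReal := by
      have := cdf_mono hfin hc
      rw [abs_of_nonneg (by linarith), cdf_Ioc hfin hc]
    rw [habs]
    exact ENNReal.toReal_lt_of_lt_ofReal (lt_of_le_of_lt (measure_mono hsub) hn)


lemma m0_mono_Ioo {S : Set ℝ} {α β : ℝ} (hS : S ⊆ Set.Ioo α β) :
    m0 S ≤ ENNReal.ofReal (β - α) := by
  calc m0 S ≤ m0 (Set.Ioo α β) := measure_mono hS
    _ = volume (Set.Ioo α β ∩ Set.Ioi 0) := Measure.restrict_apply measurableSet_Ioo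
    _ ≤ volume (Set.Ioo α β) := measure_mono Set.inter_subset_left
    _ = ENNReal.ofReal (β - α) := Real.volume_Ioo

lemma m0_Ioo_of_nonneg {α β : ℝ} (hα : 0 ≤ α) :
    m0 (Set.Ioo α β) = ENNReal.ofReal (β - α) := by
  rw [m0, Measure.restrict_apply measurableSet_Ioo]
  have h' : Set.Ioo α β ∩ Set.Ioi 0 = Set.Ioo α β :=
    Set.inter_eq_left.mpr (fun x hx => lt_of_le_of_lt hα hx.1)
  rw [h', Real.volume_Ioo]

lemma m0_Iic_zero : m0 (Set.Iic (0:ℝ)) = 0 := by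
  rw [m0, Measure.restrict_apply measurableSet_Iic]
  convert measure_empty (μ := (volume : Measure ℝ))
  ext x
  simp only [Set.mem_inter_iff, Set.mem_Iic, Set.mem_Ioi, Set.mem_empty_iff_false, iff_false,
    not_and]
  intro h1
  linarith

lemma m0_le_of_inter {S : Set ℝ} {β : ℝ} (hβ : 0 ≤ β) (hS : ∀ x ∈ S, 0 < x → x < β) :
    m0 S ≤ ENNReal.ofReal β := by
  have hsub : S ⊆ Set.Ioo 0 β ∪ Set.Iic 0 := by
    intro x hx
    rcases le_or_gt x 0 with h | h
    · exact Or.inr h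
    · exact Or.inl ⟨h, hS x hx h⟩
  calc m0 S ≤ m0 (Set.Ioo 0 β ∪ Set.Iic 0) := measure_mono hsub
    _ ≤ m0 (Set.Ioo 0 β) + m0 (Set.Iic 0) := measure_union_le _ _
    _ = ENNReal.ofReal β := by
        rw [m0_Ioo_of_nonneg le_rfl, m0_Iic_zero, add_zero, sub_zero]

lemma mu_eq_of (G : ℝ → ℝ) (s τ : ℝ) (hτ0 : 0 ≤ τ)
    (hmem : m0 {x | τ < |G x|} ≤ ENNReal.ofReal s)
    (hlb : ∀ u, 0 ≤ u → m0 {x | u < |G x|} ≤ ENNReal.ofReal s → τ ≤ u) :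
    mu G s = τ := by
  unfold mu
  apply le_antisymm
  · exact csInf_le ⟨0, fun u hu => hu.1⟩ ⟨hτ0, hmem⟩
  · exact le_csInf ⟨τ, hτ0, hmem⟩ (fun u hu => hlb u hu.1 hu.2)

lemma level_indicator {h : ℝ → ℝ} (h0 : ∀ x, 0 ≤ h x) (Δ : Set ℝ) {u : ℝ} (hu : 0 ≤ u) :
    {x : ℝ | u < |Δ.indicator h x|} = {x ∈ Δ | u < h x} := by
  ext x
  simp only [Set.mem_setOf_eq, Set.mem_sep_iff]
  by_cases hx : x ∈ Δ
  · rw [Set.indicator_of_mem hx, abs_of_nonneg (h0 x)]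
    exact ⟨fun hh => ⟨hx, hh⟩, fun hh => hh.2⟩
  · rw [Set.indicator_of_notMem hx, abs_zero]
    constructor
    · intro hc; linarith
    · intro hc; exact absurd hc.1 hx

lemma rc_delta {h : ℝ → ℝ} {x u : ℝ} (hx : 0 < x)
    (hr : ∀ y ∈ Set.Ioi (0:ℝ), ContinuousWithinAt h (Set.Ici y) y)
    (hu : u < h x) :
    ∃ δ > 0, ∀ y, x ≤ y → y < x + δ → u < h y := by
  have hev : ∀ᶠ y in 𝓝[Set.Ici x] x, u < h y :=
    (hr x hx).eventually (eventually_gt_nhds hu)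
  rw [eventually_nhdsWithin_iff, Metric.eventually_nhds_iff] at hev
  obtain ⟨δ, hδ, hball⟩ := hev
  refine ⟨δ, hδ, fun y h1 h2 => ?_⟩
  refine hball ?_ h1
  rw [Real.dist_eq, abs_of_nonneg (by linarith)]
  linarith

lemma mu_indicator_Ioo {h : ℝ → ℝ} (h0 : ∀ x, 0 ≤ h x) (hmono : AntitoneOn h (Set.Ioi 0))
    (hr : ∀ y ∈ Set.Ioi (0:ℝ), ContinuousWithinAt h (Set.Ici y) y)
    {a b s : ℝ} (ha0 : 0 ≤ a) (hab : a < b) (hs : 0 < s) :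
    mu ((Set.Ioo a b).indicator h) s = if a + s < b then h (a + s) else 0 := by
  split_ifs with hcase
  · apply mu_eq_of _ _ _ (h0 (a+s))
    · rw [level_indicator h0 _ (h0 (a+s))]
      refine le_trans (m0_mono_Ioo (α := a) (β := a + s) ?_)
        (by rw [show a + s - a = s by ring])
      rintro x ⟨hxΔ, hxv⟩
      refine ⟨hxΔ.1, ?_⟩
      by_contra hc
      push_neg at hc
      have hxpos : x ∈ Set.Ioi (0:ℝ) := lt_of_le_of_lt ha0 hxΔ.1
      have : h x ≤ h (a+s) := hmono (by simp only [Set.mem_Ioi]; linarith) hxpos hc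
      linarith
    · intro u hu0 hum
      by_contra hc
      push_neg at hc
      obtain ⟨δ, hδ, hδp⟩ := rc_delta (show (0:ℝ) < a + s by linarith) hr hc
      set e := min (a + s + δ) b with he
      have h1 : a + s < e := lt_min (by linarith) hcase
      rw [level_indicator h0 _ hu0] at hum
      have hsub : Set.Ioo a e ⊆ {x ∈ Set.Ioo a b | u < h x} := by
        intro x hx
        have hxb : x < b := lt_of_lt_of_le hx.2 (min_le_right _ _)
        refine ⟨⟨hx.1, hxb⟩, ?_⟩
        rcases le_or_gt x (a+s) with hle | hlt
        · have hxpos : x ∈ Set.Ioi (0:ℝ) := lt_of_le_of_lt ha0 hx.1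
          have : h (a+s) ≤ h x := hmono hxpos (by simp only [Set.mem_Ioi]; linarith) hle
          linarith
        · exact hδp x hlt.le (lt_of_lt_of_le hx.2 (min_le_left _ _))
      have h2 : ENNReal.ofReal (e - a) ≤ ENNReal.ofReal s := by
        calc ENNReal.ofReal (e - a) = m0 (Set.Ioo a e) := (m0_Ioo_of_nonneg ha0).symm
          _ ≤ m0 {x ∈ Set.Ioo a b | u < h x} := measure_mono hsub
          _ ≤ ENNReal.ofReal s := hum
      rw [ENNReal.ofReal_le_ofReal_iff hs.le] at h2
      linarith
  · apply mu_eq_of _ _ _ le_rfl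
    · rw [level_indicator h0 _ le_rfl]
      push_neg at hcase
      refine le_trans (m0_mono_Ioo (α := a) (β := b) (fun x hx => hx.1))
        (ENNReal.ofReal_le_ofReal (by linarith))
    · intro u hu0 _
      exact hu0

lemma mu_indicator_Ioi {h : ℝ → ℝ} (h0 : ∀ x, 0 ≤ h x) (hmono : AntitoneOn h (Set.Ioi 0))
    (hr : ∀ y ∈ Set.Ioi (0:ℝ), ContinuousWithinAt h (Set.Ici y) y)
    {a s : ℝ} (ha0 : 0 ≤ a) (hs : 0 < s) :
    mu ((Set.Ioi a).indicator h) s = h (a + s) := by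
  apply mu_eq_of _ _ _ (h0 (a+s))
  · rw [level_indicator h0 _ (h0 (a+s))]
    refine le_trans (m0_mono_Ioo (α := a) (β := a + s) ?_)
      (by rw [show a + s - a = s by ring])
    rintro x ⟨hxΔ, hxv⟩
    refine ⟨hxΔ, ?_⟩
    by_contra hc
    push_neg at hc
    have hxpos : x ∈ Set.Ioi (0:ℝ) := lt_of_le_of_lt ha0 hxΔ
    have : h x ≤ h (a+s) := hmono (by simp only [Set.mem_Ioi]; linarith) hxpos hc
    linarith
  · intro u hu0 hum
    by_contra hc
    push_neg at hc
    obtain ⟨δ, hδ, hδp⟩ := rc_delta (show (0:ℝ) < a + s by linarith) hr hc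
    rw [level_indicator h0 _ hu0] at hum
    have hsub : Set.Ioo a (a + s + δ) ⊆ {x ∈ Set.Ioi a | u < h x} := by
      intro x hx
      refine ⟨hx.1, ?_⟩
      rcases le_or_gt x (a+s) with hle | hlt
      · have hxpos : x ∈ Set.Ioi (0:ℝ) := lt_of_le_of_lt ha0 hx.1
        have : h (a+s) ≤ h x := hmono hxpos (by simp only [Set.mem_Ioi]; linarith) hle
        linarith
      · exact hδp x hlt.le hx.2
    have h2 : ENNReal.ofReal (a + s + δ - a) ≤ ENNReal.ofReal s := by
      calc ENNReal.ofReal (a + s + δ - a) = m0 (Set.Ioo a (a + s + δ)) :=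
            (m0_Ioo_of_nonneg ha0).symm
        _ ≤ m0 {x ∈ Set.Ioi a | u < h x} := measure_mono hsub
        _ ≤ ENNReal.ofReal s := hum
    rw [ENNReal.ofReal_le_ofReal_iff hs.le] at h2
    linarith

lemma mu_self {h : ℝ → ℝ} (h0 : ∀ x, 0 ≤ h x) (hmono : AntitoneOn h (Set.Ioi 0))
    (hr : ∀ y ∈ Set.Ioi (0:ℝ), ContinuousWithinAt h (Set.Ici y) y)
    {s : ℝ} (hs : 0 < s) :
    mu h s = h s := by
  apply mu_eq_of _ _ _ (h0 s)
  · refine m0_le_of_inter hs.le (fun x hx hx0 => ?_)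
    simp only [Set.mem_setOf_eq, abs_of_nonneg (h0 x)] at hx
    by_contra hc
    push_neg at hc
    have : h x ≤ h s := hmono (Set.mem_Ioi.mpr hs) (Set.mem_Ioi.mpr hx0) hc
    linarith
  · intro u hu0 hum
    by_contra hc
    push_neg at hc
    obtain ⟨δ, hδ, hδp⟩ := rc_delta hs hr hc
    have hsub : Set.Ioo 0 (s + δ) ⊆ {x : ℝ | u < |h x|} := by
      intro x hx
      simp only [Set.mem_setOf_eq, abs_of_nonneg (h0 x)]
      rcases le_or_gt x s with hle | hlt
      · have : h s ≤ h x := hmono (Set.mem_Ioi.mpr hx.1) (Set.mem_Ioi.mpr hs) hle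
        linarith
      · exact hδp x hlt.le hx.2
    have h2 : ENNReal.ofReal (s + δ - 0) ≤ ENNReal.ofReal s := by
      calc ENNReal.ofReal (s + δ - 0) = m0 (Set.Ioo 0 (s+δ)) := (m0_Ioo_of_nonneg le_rfl).symm
        _ ≤ m0 {x : ℝ | u < |h x|} := measure_mono hsub
        _ ≤ ENNReal.ofReal s := hum
    rw [ENNReal.ofReal_le_ofReal_iff hs.le] at h2
    linarith

lemma head_self {h : ℝ → ℝ} (h0 : ∀ x, 0 ≤ h x) (hmono : AntitoneOn h (Set.Ioi 0))
    (hr : ∀ y ∈ Set.Ioi (0:ℝ), ContinuousWithinAt h (Set.Ici y) y)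
    {t : ℝ} (ht : 0 < t) :
    ∫⁻ s in Set.Ioc (0:ℝ) t, ENNReal.ofReal (mu h s) = nu h (Set.Iic t) := by
  rw [setLIntegral_congr_fun measurableSet_Ioc ((fun s hs => by
      rw [mu_self h0 hmono hr hs.1] : ∀ s ∈ Set.Ioc (0:ℝ) t,
        ENNReal.ofReal (mu h s) = ENNReal.ofReal (h s)))]
  rw [nu_Iic]

lemma head_ind_Ioo {h : ℝ → ℝ} (h0 : ∀ x, 0 ≤ h x) (hmono : AntitoneOn h (Set.Ioi 0))
    (hr : ∀ y ∈ Set.Ioi (0:ℝ), ContinuousWithinAt h (Set.Ici y) y)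
    {a b t : ℝ} (ha0 : 0 ≤ a) (hab : a < b) (ht : 0 < t) :
    ∫⁻ s in Set.Ioc (0:ℝ) t, ENNReal.ofReal (mu ((Set.Ioo a b).indicator h) s) =
      nu h (Set.Ioc a (min (a + t) b)) := by
  have step1 : ∫⁻ s in Set.Ioc (0:ℝ) t, ENNReal.ofReal (mu ((Set.Ioo a b).indicator h) s)
      = ∫⁻ s in Set.Ioc (0:ℝ) t, ENNReal.ofReal (if a + s < b then h (a+s) else 0) := by
    refine setLIntegral_congr_fun measurableSet_Ioc (fun s hs => ?_)
    rw [mu_indicator_Ioo h0 hmono hr ha0 hab hs.1]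
  rw [step1, ← lintegral_indicator measurableSet_Ioc]
  have step2 : ∀ᵐ s : ℝ, (Set.Ioc (0:ℝ) t).indicator
        (fun s => ENNReal.ofReal (if a + s < b then h (a+s) else 0)) s
      = (Set.Ioc a (min (a + t) b)).indicator (fun y => ENNReal.ofReal (h y)) (a + s) := by
    have hae : ∀ᵐ s : ℝ, s ≠ b - a := by
      rw [ae_iff]
      have h' : {s : ℝ | ¬ s ≠ b - a} = {b - a} := by ext; simp
      rw [h']
      exact Real.volume_singleton
    filter_upwards [hae] with s hsne
    by_cases hs : s ∈ Set.Ioc (0:ℝ) t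
    · rw [Set.indicator_of_mem hs]
      by_cases hb' : a + s < b
      · have hmem : a + s ∈ Set.Ioc a (min (a + t) b) :=
          ⟨by linarith [hs.1], le_min (by linarith [hs.2]) hb'.le⟩
        rw [if_pos hb', Set.indicator_of_mem hmem]
      · push_neg at hb'
        have hbs : b < a + s := lt_of_le_of_ne hb' (fun hcc => hsne (by linarith))
        have hnmem : a + s ∉ Set.Ioc a (min (a + t) b) := by
          intro hmem
          exact absurd (le_trans hmem.2 (min_le_right _ _)) (not_le.mpr hbs)
        rw [if_neg (not_lt.mpr hb'), Set.indicator_of_notMem hnmem, ENNReal.ofReal_zero]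
    · rw [Set.indicator_of_notMem hs]
      have hnmem : a + s ∉ Set.Ioc a (min (a + t) b) := by
        intro hmem
        apply hs
        have h2 := le_trans hmem.2 (min_le_left _ _)
        exact ⟨by linarith [hmem.1], by linarith⟩
      rw [Set.indicator_of_notMem hnmem]
  rw [lintegral_congr_ae step2]
  have step3 : ∫⁻ s : ℝ, (Set.Ioc a (min (a + t) b)).indicator
        (fun y => ENNReal.ofReal (h y)) (a + s)
      = ∫⁻ y, (Set.Ioc a (min (a + t) b)).indicator (fun y => ENNReal.ofReal (h y)) y := by
    simp_rw [add_comm a]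
    exact lintegral_add_right_eq_self _ a
  rw [step3, lintegral_indicator measurableSet_Ioc,
    nu_apply' h measurableSet_Ioc (fun x hx => lt_of_le_of_lt ha0 hx.1)]

lemma head_ind_Ioi {h : ℝ → ℝ} (h0 : ∀ x, 0 ≤ h x) (hmono : AntitoneOn h (Set.Ioi 0))
    (hr : ∀ y ∈ Set.Ioi (0:ℝ), ContinuousWithinAt h (Set.Ici y) y)
    {a t : ℝ} (ha0 : 0 ≤ a) (ht : 0 < t) :
    ∫⁻ s in Set.Ioc (0:ℝ) t, ENNReal.ofReal (mu ((Set.Ioi a).indicator h) s) =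
      nu h (Set.Ioc a (a + t)) := by
  have step1 : ∫⁻ s in Set.Ioc (0:ℝ) t, ENNReal.ofReal (mu ((Set.Ioi a).indicator h) s)
      = ∫⁻ s in Set.Ioc (0:ℝ) t, ENNReal.ofReal (h (a + s)) := by
    refine setLIntegral_congr_fun measurableSet_Ioc (fun s hs => ?_)
    rw [mu_indicator_Ioi h0 hmono hr ha0 hs.1]
  rw [step1, ← lintegral_indicator measurableSet_Ioc]
  have step2 : ∀ s : ℝ, (Set.Ioc (0:ℝ) t).indicator
        (fun s => ENNReal.ofReal (h (a + s))) s
      = (Set.Ioc a (a + t)).indicator (fun y => ENNReal.ofReal (h y)) (a + s) := by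
    intro s
    by_cases hs : s ∈ Set.Ioc (0:ℝ) t
    · have hmem : a + s ∈ Set.Ioc a (a + t) := ⟨by linarith [hs.1], by linarith [hs.2]⟩
      rw [Set.indicator_of_mem hs, Set.indicator_of_mem hmem]
    · have hnmem : a + s ∉ Set.Ioc a (a + t) := by
        intro hmem
        exact hs ⟨by linarith [hmem.1], by linarith [hmem.2]⟩
      rw [Set.indicator_of_notMem hs, Set.indicator_of_notMem hnmem]
  rw [lintegral_congr step2]
  have step3 : ∫⁻ s : ℝ, (Set.Ioc a (a + t)).indicator
        (fun y => ENNReal.ofReal (h y)) (a + s)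
      = ∫⁻ y, (Set.Ioc a (a + t)).indicator (fun y => ENNReal.ofReal (h y)) y := by
    simp_rw [add_comm a]
    exact lintegral_add_right_eq_self _ a
  rw [step3, lintegral_indicator measurableSet_Ioc,
    nu_apply' h measurableSet_Ioc (fun x hx => lt_of_le_of_lt ha0 hx.1)]

lemma nu_le_of_headMaj {f g : ℝ → ℝ}
    (hf0 : ∀ x, 0 ≤ f x) (hfmono : AntitoneOn f (Set.Ioi 0))
    (hfr : ∀ y ∈ Set.Ioi (0:ℝ), ContinuousWithinAt f (Set.Ici y) y)
    (hg0 : ∀ x, 0 ≤ g x) (hgmono : AntitoneOn g (Set.Ioi 0))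
    (hgr : ∀ y ∈ Set.Ioi (0:ℝ), ContinuousWithinAt g (Set.Ici y) y)
    (hmaj : HeadMaj g f) (t : ℝ) :
    nu g (Set.Iic t) ≤ nu f (Set.Iic t) := by
  rcases le_or_gt t 0 with h | h
  · rw [nu_Iic_nonpos g h, nu_Iic_nonpos f h]
  · rw [← head_self hg0 hgmono hgr h, ← head_self hf0 hfmono hfr h]
    exact hmaj t h

/-- The excess function `H = F - G`. -/
def Hf (f g : ℝ → ℝ) : ℝ → ℝ := fun t => cdf f t - cdf g t

/-- The "falling sun" set: points that see a strictly smaller value of `H` to the right. -/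
def Eset (f g : ℝ → ℝ) : Set ℝ := {x | ∃ y, x < y ∧ Hf f g y < Hf f g x}

section Esec

variable {f g : ℝ → ℝ}

lemma Hf_cont (hffin : ∀ t, nu f (Set.Iic t) ≠ ⊤) (hgfin : ∀ t, nu g (Set.Iic t) ≠ ⊤) :
    Continuous (Hf f g) := (cdf_continuous hffin).sub (cdf_continuous hgfin)

lemma Hf_nonneg (hgf : ∀ t, nu g (Set.Iic t) ≤ nu f (Set.Iic t))
    (hffin : ∀ t, nu f (Set.Iic t) ≠ ⊤) (t : ℝ) : 0 ≤ Hf f g t :=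
  sub_nonneg.mpr (ENNReal.toReal_mono (hffin t) (hgf t))

lemma Hf_nonpos_zero {t : ℝ} (ht : t ≤ 0) : Hf f g t = 0 := by
  simp [Hf, cdf, nu_Iic_nonpos _ ht]

lemma E_open (hffin : ∀ t, nu f (Set.Iic t) ≠ ⊤) (hgfin : ∀ t, nu g (Set.Iic t) ≠ ⊤) :
    IsOpen (Eset f g) := by
  rw [isOpen_iff_mem_nhds]
  rintro x ⟨y, hxy, hy⟩
  have h1 : ∀ᶠ z in 𝓝 x, Hf f g y < Hf f g z :=
    ((Hf_cont hffin hgfin).continuousAt).eventually (eventually_gt_nhds hy)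
  have h2 : ∀ᶠ z in 𝓝 x, z < y := Filter.eventually_iff.2 (Iio_mem_nhds hxy)
  have h3 : ∀ᶠ z in 𝓝 x, z ∈ Eset f g := by
    filter_upwards [h1, h2] with z hz1 hz2
    exact ⟨y, hz2, hz1⟩
  simpa [Filter.eventually_iff, Set.setOf_mem_eq] using h3

lemma not_mem_E_nonpos (hgf : ∀ t, nu g (Set.Iic t) ≤ nu f (Set.Iic t))
    (hffin : ∀ t, nu f (Set.Iic t) ≠ ⊤) {x : ℝ} (hx : x ≤ 0) : x ∉ Eset f g := by
  rintro ⟨y, hxy, hy⟩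
  have h1 := Hf_nonneg hgf hffin y
  rw [Hf_nonpos_zero hx] at hy
  linarith

lemma notE_le {a : ℝ} (ha : a ∉ Eset f g) : ∀ y, a < y → Hf f g a ≤ Hf f g y := by
  intro y hy
  by_contra hc
  push_neg at hc
  exact ha ⟨y, hy, hc⟩

lemma mem_E_pos (hgf : ∀ t, nu g (Set.Iic t) ≤ nu f (Set.Iic t))
    (hffin : ∀ t, nu f (Set.Iic t) ≠ ⊤) {x : ℝ} (hx : x ∈ Eset f g) : 0 < x :=
  not_le.mp (fun h => not_mem_E_nonpos hgf hffin h hx)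

lemma rc_band {h : ℝ → ℝ} {x ε : ℝ} (hx : 0 < x)
    (hr : ∀ y ∈ Set.Ioi (0:ℝ), ContinuousWithinAt h (Set.Ici y) y) (hε : 0 < ε) :
    ∃ δ > 0, ∀ y, x ≤ y → y < x + δ → |h y - h x| < ε := by
  obtain ⟨δ, hδ, hcl⟩ := Metric.tendsto_nhdsWithin_nhds.mp (hr x hx) ε hε
  refine ⟨δ, hδ, fun y h1 h2 => ?_⟩
  have := hcl (Set.mem_Ici.mpr h1) (by rw [Real.dist_eq, abs_of_nonneg (by linarith)]; linarith)
  rwa [Real.dist_eq] at this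

lemma mem_E_of_gt {f g : ℝ → ℝ} (hgm : Measurable g)
    (hf0 : ∀ x, 0 ≤ f x)
    (hfr : ∀ y ∈ Set.Ioi (0:ℝ), ContinuousWithinAt f (Set.Ici y) y)
    (hgr : ∀ y ∈ Set.Ioi (0:ℝ), ContinuousWithinAt g (Set.Ici y) y)
    (hffin : ∀ t, nu f (Set.Iic t) ≠ ⊤) (hgfin : ∀ t, nu g (Set.Iic t) ≠ ⊤)
    {x : ℝ} (hx : 0 < x) (hgtf : f x < g x) : x ∈ Eset f g := by
  set ε := (g x - f x)/3 with hε
  have hεpos : 0 < ε := by rw [hε]; linarith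
  obtain ⟨δ1, hδ1, h1⟩ := rc_band hx hfr hεpos
  obtain ⟨δ2, hδ2, h2⟩ := rc_band hx hgr hεpos
  set y := x + min δ1 δ2 / 2 with hy
  have hmin : 0 < min δ1 δ2 := lt_min hδ1 hδ2
  have hxy : x < y := by rw [hy]; linarith
  have hsub : Set.Ioc x y ⊆ Set.Ioi (0:ℝ) := fun z hz => lt_trans hx hz.1
  have hpt : ∀ z ∈ Set.Ioc x y, ENNReal.ofReal (f z) + ENNReal.ofReal ε ≤
      ENNReal.ofReal (g z) := by
    intro z hz
    have hzy : z < x + min δ1 δ2 := by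
      have := hz.2
      rw [hy] at this
      linarith
    have hz1 := abs_lt.mp (h1 z hz.1.le (lt_of_lt_of_le hzy (by linarith [min_le_left δ1 δ2])))
    have hz2 := abs_lt.mp (h2 z hz.1.le (lt_of_lt_of_le hzy (by linarith [min_le_right δ1 δ2])))
    rw [← ENNReal.ofReal_add (hf0 z) hεpos.le]
    apply ENNReal.ofReal_le_ofReal
    linarith [hz1.2, hz2.1]
  have hkey : nu f (Set.Ioc x y) + ENNReal.ofReal (ε * (y - x)) ≤ nu g (Set.Ioc x y) := by
    have lhs : nu f (Set.Ioc x y) + ENNReal.ofReal (ε * (y - x)) =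
        ∫⁻ z in Set.Ioc x y, (ENNReal.ofReal (f z) + ENNReal.ofReal ε) := by
      rw [nu_apply' f measurableSet_Ioc hsub,
        lintegral_add_right _ measurable_const, setLIntegral_const, Real.volume_Ioc,
        ← ENNReal.ofReal_mul hεpos.le, mul_comm ε (y - x), mul_comm]
    rw [lhs, nu_apply' g measurableSet_Ioc hsub]
    exact setLIntegral_mono hgm.ennreal_ofReal hpt
  have hfin1 : nu f (Set.Ioc x y) ≠ ⊤ := nu_Ioc_ne_top hffin _ _
  have hfin2 : nu g (Set.Ioc x y) ≠ ⊤ := nu_Ioc_ne_top hgfin _ _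
  have hreal : (nu f (Set.Ioc x y)).toReal + ε*(y-x) ≤ (nu g (Set.Ioc x y)).toReal := by
    have h' := ENNReal.toReal_mono hfin2 hkey
    rw [ENNReal.toReal_add hfin1 ENNReal.ofReal_ne_top,
      ENNReal.toReal_ofReal (mul_nonneg hεpos.le (by linarith))] at h'
    linarith
  refine ⟨y, hxy, ?_⟩
  have e1 : (nu f (Set.Ioc x y)).toReal = cdf f y - cdf f x := cdf_Ioc hffin hxy.le
  have e2 : (nu g (Set.Ioc x y)).toReal = cdf g y - cdf g x := cdf_Ioc hgfin hxy.le
  have hpos : 0 < ε * (y - x) := mul_pos hεpos (by linarith)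
  simp only [Hf]
  linarith

end Esec

/-- Left endpoint of the component of `x` in `Eset f g`. -/
def Aend (f g : ℝ → ℝ) (x : ℝ) : ℝ := sSup {y | y ≤ x ∧ y ∉ Eset f g}

/-- The set of stopping points to the right of `x`. -/
def Bset (f g : ℝ → ℝ) (x : ℝ) : Set ℝ := {y | x ≤ y ∧ y ∉ Eset f g}

open Classical in
/-- The component of `x` in `Eset f g`. -/
def cInt (f g : ℝ → ℝ) (x : ℝ) : Set ℝ :=
  if (Bset f g x).Nonempty then Set.Ioo (Aend f g x) (sInf (Bset f g x))
  else Set.Ioi (Aend f g x)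

section Csec

variable {f g : ℝ → ℝ}
variable (hopen : IsOpen (Eset f g)) (hnp : ∀ x : ℝ, x ≤ 0 → x ∉ Eset f g)

include hopen hnp

lemma Aend_spec {x : ℝ} (hx : x ∈ Eset f g) :
    Aend f g x < x ∧ Aend f g x ∉ Eset f g ∧ 0 ≤ Aend f g x := by
  have hxpos : 0 < x := not_le.mp (fun h => hnp x h hx)
  have hset : {y | y ≤ x ∧ y ∉ Eset f g} = Set.Iic x ∩ (Eset f g)ᶜ := by
    ext y; simp [Set.mem_Iic, Set.mem_compl_iff]
  have hclosed : IsClosed {y | y ≤ x ∧ y ∉ Eset f g} := by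
    rw [hset]; exact isClosed_Iic.inter hopen.isClosed_compl
  have hne : Set.Nonempty {y | y ≤ x ∧ y ∉ Eset f g} := ⟨0, hxpos.le, hnp 0 le_rfl⟩
  have hbdd : BddAbove {y | y ≤ x ∧ y ∉ Eset f g} := ⟨x, fun y hy => hy.1⟩
  have hmem := hclosed.csSup_mem hne hbdd
  have h0le : 0 ≤ Aend f g x := le_csSup hbdd ⟨hxpos.le, hnp 0 le_rfl⟩
  refine ⟨lt_of_le_of_ne hmem.1 ?_, hmem.2, h0le⟩
  intro he
  rw [← he] at hx
  exact hmem.2 hx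

lemma Binf_spec {x : ℝ} (hx : x ∈ Eset f g) (hB : (Bset f g x).Nonempty) :
    x < sInf (Bset f g x) ∧ sInf (Bset f g x) ∉ Eset f g := by
  have hset : Bset f g x = Set.Ici x ∩ (Eset f g)ᶜ := by
    ext y; simp [Bset, Set.mem_Ici, Set.mem_compl_iff]
  have hclosed : IsClosed (Bset f g x) := by
    rw [hset]; exact isClosed_Ici.inter hopen.isClosed_compl
  have hbdd : BddBelow (Bset f g x) := ⟨x, fun y hy => hy.1⟩
  have hmem := hclosed.csInf_mem hB hbdd
  refine ⟨lt_of_le_of_ne hmem.1 ?_, hmem.2⟩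
  intro he
  rw [he] at hx
  exact hmem.2 hx

lemma mem_cInt {x : ℝ} (hx : x ∈ Eset f g) : x ∈ cInt f g x := by
  unfold cInt
  split_ifs with hB
  · exact ⟨(Aend_spec hopen hnp hx).1, (Binf_spec hopen hnp hx hB).1⟩
  · exact (Aend_spec hopen hnp hx).1

lemma cInt_sub_E {x : ℝ} (hx : x ∈ Eset f g) : cInt f g x ⊆ Eset f g := by
  have hA := Aend_spec hopen hnp hx
  unfold cInt
  split_ifs with hB
  · intro z hz
    by_contra hzE
    rcases le_or_gt z x with h | h
    · have : z ≤ Aend f g x := le_csSup ⟨x, fun y hy => hy.1⟩ ⟨h, hzE⟩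
      linarith [hz.1]
    · have : sInf (Bset f g x) ≤ z := csInf_le ⟨x, fun y hy => hy.1⟩ ⟨h.le, hzE⟩
      linarith [hz.2]
  · intro z hz
    by_contra hzE
    rcases le_or_gt z x with h | h
    · have : z ≤ Aend f g x := le_csSup ⟨x, fun y hy => hy.1⟩ ⟨h, hzE⟩
      simp only [Set.mem_Ioi] at hz
      linarith
    · exact hB ⟨z, h.le, hzE⟩

lemma cInt_eq_of_mem {x x' : ℝ} (hx : x ∈ Eset f g) (hx' : x' ∈ cInt f g x) :
    cInt f g x' = cInt f g x := by
  have hx'E : x' ∈ Eset f g := cInt_sub_E hopen hnp hx hx'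
  have hA := Aend_spec hopen hnp hx
  have hIoosub : Set.Ioc (Aend f g x) x' ⊆ cInt f g x := by
    have hx'mem := hx'
    unfold cInt at hx'mem ⊢
    intro z hz
    by_cases hB : (Bset f g x).Nonempty
    · rw [if_pos hB] at hx'mem ⊢
      exact ⟨hz.1, lt_of_le_of_lt hz.2 hx'mem.2⟩
    · rw [if_neg hB] at hx'mem ⊢
      exact hz.1
  have hAeq : Aend f g x' = Aend f g x := by
    apply le_antisymm
    · have h0x' : (0:ℝ) ≤ x' := (not_le.mp (fun h => hnp x' h hx'E)).le
      have hne' : Set.Nonempty {y | y ≤ x' ∧ y ∉ Eset f g} := ⟨0, h0x', hnp 0 le_rfl⟩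
      apply csSup_le hne'
      intro y hy
      by_contra hc
      push_neg at hc
      rcases eq_or_lt_of_le hy.1 with he | hlt
      · exact hy.2 (by rw [he]; exact hx'E)
      · exact hy.2 (cInt_sub_E hopen hnp hx (hIoosub ⟨hc, hlt.le⟩))
    · apply le_csSup ⟨x', fun y hy => hy.1⟩
      have hax' : Aend f g x < x' := by
        have := hIoosub
        unfold cInt at hx'
        by_cases hB : (Bset f g x).Nonempty
        · rw [if_pos hB] at hx'; exact hx'.1
        · rw [if_neg hB] at hx'; exact hx'
      exact ⟨hax'.le, hA.2.1⟩
  by_cases hB : (Bset f g x).Nonempty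
  · have hbspec := Binf_spec hopen hnp hx hB
    have hx'lt : x' < sInf (Bset f g x) := by
      have := hx'
      unfold cInt at this
      rw [if_pos hB] at this
      exact this.2
    have hB' : (Bset f g x').Nonempty := ⟨sInf (Bset f g x), hx'lt.le, hbspec.2⟩
    have hBeq : sInf (Bset f g x') = sInf (Bset f g x) := by
      apply le_antisymm
      · exact csInf_le ⟨x', fun y hy => hy.1⟩ ⟨hx'lt.le, hbspec.2⟩
      · apply le_csInf hB'
        intro y hy
        by_contra hc
        push_neg at hc
        have hyE : y ∈ Eset f g := by
          apply cInt_sub_E hopen hnp hx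
          unfold cInt
          rw [if_pos hB]
          refine ⟨?_, hc⟩
          calc Aend f g x < x' := by
                have := hx'; unfold cInt at this; rw [if_pos hB] at this; exact this.1
            _ ≤ y := hy.1
        exact hy.2 hyE
    unfold cInt
    rw [if_pos hB, if_pos hB', hAeq, hBeq]
  · have hB' : ¬ (Bset f g x').Nonempty := by
      intro ⟨y, hy⟩
      apply hy.2
      apply cInt_sub_E hopen hnp hx
      unfold cInt
      rw [if_neg hB]
      have hax' : Aend f g x < x' := by
        have := hx'; unfold cInt at this; rw [if_neg hB] at this; exact this
      exact Set.mem_Ioi.mpr (lt_of_lt_of_le hax' hy.1)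
    unfold cInt
    rw [if_neg hB, if_neg hB', hAeq]

lemma cInt_disj_or_eq {x x' : ℝ} (hx : x ∈ Eset f g) (hx' : x' ∈ Eset f g) :
    cInt f g x = cInt f g x' ∨ Disjoint (cInt f g x) (cInt f g x') := by
  rcases Set.eq_empty_or_nonempty (cInt f g x ∩ cInt f g x') with he | ⟨z, hz⟩
  · exact Or.inr (Set.disjoint_iff_inter_eq_empty.mpr he)
  · left
    rw [← cInt_eq_of_mem hopen hnp hx hz.1, cInt_eq_of_mem hopen hnp hx' hz.2]

end Csec

section Compok

variable {f g : ℝ → ℝ}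

lemma nu_Ioc_le_of_notE (hffin : ∀ t, nu f (Set.Iic t) ≠ ⊤)
    (hgfin : ∀ t, nu g (Set.Iic t) ≠ ⊤)
    {a : ℝ} (haE : a ∉ Eset f g) {c : ℝ} (hc : a < c) :
    nu g (Set.Ioc a c) ≤ nu f (Set.Ioc a c) := by
  have hH : Hf f g a ≤ Hf f g c := notE_le haE c hc
  rw [← ENNReal.toReal_le_toReal (nu_Ioc_ne_top hgfin _ _) (nu_Ioc_ne_top hffin _ _),
    cdf_Ioc hgfin hc.le, cdf_Ioc hffin hc.le]
  simp only [Hf] at hH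
  linarith

lemma comp_Ioo_ok
    (hf0 : ∀ x, 0 ≤ f x) (hfmono : AntitoneOn f (Set.Ioi 0))
    (hfr : ∀ y ∈ Set.Ioi (0:ℝ), ContinuousWithinAt f (Set.Ici y) y)
    (hg0 : ∀ x, 0 ≤ g x) (hgmono : AntitoneOn g (Set.Ioi 0))
    (hgr : ∀ y ∈ Set.Ioi (0:ℝ), ContinuousWithinAt g (Set.Ici y) y)
    (hffin : ∀ t, nu f (Set.Iic t) ≠ ⊤) (hgfin : ∀ t, nu g (Set.Iic t) ≠ ⊤)
    {a b : ℝ} (ha0 : 0 ≤ a) (hab : a < b)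
    (haE : a ∉ Eset f g) (hbE : b ∉ Eset f g) (hsub : Set.Ioo a b ⊆ Eset f g) :
    (∫⁻ x in Set.Ioo a b, ENNReal.ofReal (g x) ∂m0 =
      ∫⁻ x in Set.Ioo a b, ENNReal.ofReal (f x) ∂m0) ∧
    HeadMaj ((Set.Ioo a b).indicator g) ((Set.Ioo a b).indicator f) := by
  have hcont : Continuous (Hf f g) := Hf_cont hffin hgfin
  constructor
  · have hC2' : ∀ x ∈ Set.Ioo a b, Hf f g b ≤ Hf f g x := by
      intro x hx
      by_contra hcc
      push_neg at hcc
      obtain ⟨z, hzmem, hzmin⟩ := isCompact_Icc.exists_isMinOn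
        (Set.nonempty_Icc.mpr hx.2.le) (hcont.continuousOn (s := Set.Icc x b))
      have hzx : Hf f g z ≤ Hf f g x := hzmin (Set.left_mem_Icc.mpr hx.2.le)
      have hzb : Hf f g z ≤ Hf f g b := hzmin (Set.right_mem_Icc.mpr hx.2.le)
      have hzE : z ∈ Eset f g := by
        apply hsub
        refine ⟨lt_of_lt_of_le hx.1 hzmem.1, ?_⟩
        rcases lt_or_eq_of_le hzmem.2 with h | h
        · exact h
        · exfalso; rw [h] at hzx; linarith
      obtain ⟨y, hzy, hy⟩ := hzE
      rcases le_or_gt y b with hyb | hyb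
      · have : Hf f g z ≤ Hf f g y := hzmin ⟨le_trans hzmem.1 hzy.le, hyb⟩
        linarith
      · exact hbE ⟨y, hyb, by linarith⟩
    have hC2 : Hf f g b ≤ Hf f g a := by
      by_contra hcc
      push_neg at hcc
      have hev : ∀ᶠ z in 𝓝 a, Hf f g z < Hf f g b :=
        hcont.continuousAt.eventually (eventually_lt_nhds hcc)
      rw [Metric.eventually_nhds_iff] at hev
      obtain ⟨r, hr, hball⟩ := hev
      have hmin : 0 < min r (b - a) := lt_min hr (by linarith)
      set x := a + min r (b - a) / 2 with hxd
      have h1 : a < x := by rw [hxd]; linarith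
      have h2 : x < b := by
        have h4 := min_le_right r (b - a)
        rw [hxd]; linarith
      have h3 : dist x a < r := by
        have h4 := min_le_left r (b - a)
        rw [Real.dist_eq, hxd, abs_of_nonneg (by linarith)]
        linarith
      exact absurd (hC2' x ⟨h1, h2⟩) (not_le.mpr (hball h3))
    have hH : Hf f g a = Hf f g b := le_antisymm (notE_le haE b hab) hC2
    have hIoc : nu g (Set.Ioc a b) = nu f (Set.Ioc a b) := by
      rw [← ENNReal.toReal_eq_toReal_iff' (nu_Ioc_ne_top hgfin _ _) (nu_Ioc_ne_top hffin _ _),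
        cdf_Ioc hgfin hab.le, cdf_Ioc hffin hab.le]
      simp only [Hf] at hH
      linarith
    have hIoo : ∀ h' : ℝ → ℝ, nu h' (Set.Ioo a b) = nu h' (Set.Ioc a b) := by
      intro h'
      rw [← Set.Ioo_union_right hab,
        measure_union (Set.disjoint_singleton_right.mpr (Set.notMem_Ioo_of_ge le_rfl))
          (measurableSet_singleton b),
        nu_singleton, add_zero]
    have hsub0 : Set.Ioo a b ⊆ Set.Ioi (0:ℝ) := fun z hz => lt_of_le_of_lt ha0 hz.1
    rw [← nu_apply_m0 g measurableSet_Ioo hsub0, ← nu_apply_m0 f measurableSet_Ioo hsub0,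
      hIoo g, hIoo f, hIoc]
  · intro t ht
    rw [head_ind_Ioo hg0 hgmono hgr ha0 hab ht, head_ind_Ioo hf0 hfmono hfr ha0 hab ht]
    exact nu_Ioc_le_of_notE hffin hgfin haE (lt_min (by linarith) hab)

lemma comp_Ioi_ok
    (hf0 : ∀ x, 0 ≤ f x) (hfmono : AntitoneOn f (Set.Ioi 0))
    (hfr : ∀ y ∈ Set.Ioi (0:ℝ), ContinuousWithinAt f (Set.Ici y) y)
    (hg0 : ∀ x, 0 ≤ g x) (hgmono : AntitoneOn g (Set.Ioi 0))
    (hgr : ∀ y ∈ Set.Ioi (0:ℝ), ContinuousWithinAt g (Set.Ici y) y)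
    (hffin : ∀ t, nu f (Set.Iic t) ≠ ⊤) (hgfin : ∀ t, nu g (Set.Iic t) ≠ ⊤)
    {a : ℝ} (ha0 : 0 ≤ a)
    (haE : a ∉ Eset f g) (hsub : Set.Ioi a ⊆ Eset f g) :
    (∫⁻ x in Set.Ioi a, ENNReal.ofReal (g x) ∂m0 =
      ∫⁻ x in Set.Ioi a, ENNReal.ofReal (f x) ∂m0) ∧
    HeadMaj ((Set.Ioi a).indicator g) ((Set.Ioi a).indicator f) := by
  have hcont : Continuous (Hf f g) := Hf_cont hffin hgfin
  have hUn : Set.Ioi a = ⋃ n : ℕ, Set.Ioc a (a + ((n:ℝ)+1)) := by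
    ext z
    simp only [Set.mem_Ioi, Set.mem_iUnion, Set.mem_Ioc]
    constructor
    · intro hz
      obtain ⟨n, hn⟩ := exists_nat_ge (z - a)
      exact ⟨n, hz, by linarith⟩
    · rintro ⟨n, hn1, _⟩
      exact hn1
  have hdir : Directed (· ⊆ ·) (fun n : ℕ => Set.Ioc a (a + ((n:ℝ)+1))) := by
    have hmon : Monotone (fun n : ℕ => Set.Ioc a (a + ((n:ℝ)+1))) := by
      intro n m hnm z hz
      have hcast : ((n:ℝ)+1) ≤ (m:ℝ)+1 := by
        have := (Nat.cast_le (α := ℝ)).mpr hnm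
        linarith
      exact ⟨hz.1, le_trans hz.2 (by linarith)⟩
    exact hmon.directed_le
  have hsup : ∀ h' : ℝ → ℝ, nu h' (Set.Ioi a) = ⨆ n : ℕ, nu h' (Set.Ioc a (a+((n:ℝ)+1))) := by
    intro h'
    rw [hUn]
    exact hdir.measure_iUnion
  have hle : nu g (Set.Ioi a) ≤ nu f (Set.Ioi a) := by
    rw [hsup g, hsup f]
    exact iSup_mono fun n => nu_Ioc_le_of_notE hffin hgfin haE
      (by have : (0:ℝ) ≤ (n:ℝ) := Nat.cast_nonneg n; linarith)
  have hge : nu f (Set.Ioi a) ≤ nu g (Set.Ioi a) := by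
    by_cases hG : nu g (Set.Ioi a) = ⊤
    · rw [hG]; exact le_top
    · have hC3 : ∀ ε : ℝ, 0 < ε → ∀ M : ℝ, ∃ y, M < y ∧ a < y ∧ Hf f g y < Hf f g a + ε := by
        intro ε hε M
        set M' := max M a with hM'
        have hev : ∀ᶠ z in 𝓝 a, Hf f g z < Hf f g a + ε :=
          hcont.continuousAt.eventually (eventually_lt_nhds (lt_add_of_pos_right _ hε))
        rw [Metric.eventually_nhds_iff] at hev
        obtain ⟨r, hr, hball⟩ := hev
        set x := a + r/2 with hx
        have hax : a < x := by rw [hx]; linarith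
        have hxH : Hf f g x < Hf f g a + ε := hball
          (by rw [Real.dist_eq, hx, add_sub_cancel_left, abs_of_nonneg (by linarith)]; linarith)
        rcases lt_or_ge M' x with hMx | hxM
        · exact ⟨x, lt_of_le_of_lt (le_max_left M a) hMx, hax, hxH⟩
        · obtain ⟨z, hzmem, hzmin⟩ := isCompact_Icc.exists_isMinOn
            (Set.nonempty_Icc.mpr (by linarith : x ≤ M' + 1))
            (hcont.continuousOn (s := Set.Icc x (M' + 1)))
          have hzx : Hf f g z ≤ Hf f g x := hzmin (Set.left_mem_Icc.mpr (by linarith))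
          have hzE : z ∈ Eset f g := hsub (lt_of_lt_of_le hax hzmem.1)
          obtain ⟨y, hzy, hy⟩ := hzE
          rcases le_or_gt y (M' + 1) with hyM | hyM
          · exact absurd (hzmin ⟨le_trans hzmem.1 hzy.le, hyM⟩) (not_le.mpr hy)
          · refine ⟨y, ?_, ?_, by linarith⟩
            · have hMa := le_max_left M a
              linarith
            · have hMa := le_max_right M a
              linarith
      rw [hsup f]
      apply iSup_le
      intro n
      apply ENNReal.le_of_forall_pos_le_add
      intro ε hε hlt
      obtain ⟨y, hyM, hay, hyH⟩ := hC3 (ε:ℝ) (by exact_mod_cast hε) (a + ((n:ℝ)+1))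
      have hycap : nu f (Set.Ioc a (a + ((n:ℝ)+1))) ≤ nu f (Set.Ioc a y) :=
        measure_mono (Set.Ioc_subset_Ioc le_rfl (by linarith))
      refine le_trans hycap ?_
      have hfin1 : nu f (Set.Ioc a y) ≠ ⊤ := nu_Ioc_ne_top hffin _ _
      have hfin2 : nu g (Set.Ioi a) + (ε:ℝ≥0∞) ≠ ⊤ :=
        ENNReal.add_ne_top.mpr ⟨hG, ENNReal.coe_ne_top⟩
      rw [← ENNReal.toReal_le_toReal hfin1 hfin2,
        ENNReal.toReal_add hG ENNReal.coe_ne_top]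
      have e1 : (nu f (Set.Ioc a y)).toReal = cdf f y - cdf f a := cdf_Ioc hffin hay.le
      have e2 : (nu g (Set.Ioc a y)).toReal = cdf g y - cdf g a := cdf_Ioc hgfin hay.le
      have e3 : (nu g (Set.Ioc a y)).toReal ≤ (nu g (Set.Ioi a)).toReal :=
        ENNReal.toReal_mono hG (measure_mono Set.Ioc_subset_Ioi_self)
      have e4 : ((ε:ℝ≥0∞)).toReal = (ε:ℝ) := rfl
      simp only [Hf] at hyH
      rw [e1, e4]
      linarith
  have hIoi : nu g (Set.Ioi a) = nu f (Set.Ioi a) := le_antisymm hle hge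
  have hsub0 : Set.Ioi a ⊆ Set.Ioi (0:ℝ) := fun z hz => lt_of_le_of_lt ha0 hz
  constructor
  · rw [← nu_apply_m0 g measurableSet_Ioi hsub0, ← nu_apply_m0 f measurableSet_Ioi hsub0, hIoi]
  · intro t ht
    rw [head_ind_Ioi hg0 hgmono hgr ha0 ht, head_ind_Ioi hf0 hfmono hfr ha0 ht]
    exact nu_Ioc_le_of_notE hffin hgfin haE (by linarith)

end Compok

/-- An enumeration of the rationals. -/
def rEnum : ℕ → ℚ := fun n => (Denumerable.eqv ℚ).symm n

lemma rEnum_surj : Function.Surjective rEnum := (Denumerable.eqv ℚ).symm.surjective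

open Classical in
/-- The `n`-th component set. -/
def Delta (f g : ℝ → ℝ) (n : ℕ) : Set ℝ :=
  if ((rEnum n : ℝ) ∈ Eset f g ∧ ∀ m < n, (rEnum m : ℝ) ∉ cInt f g (rEnum n))
  then cInt f g (rEnum n) else ∅

lemma Delta_cases (f g : ℝ → ℝ) (n : ℕ) :
    Delta f g n = ∅ ∨
    (((rEnum n : ℝ) ∈ Eset f g ∧ ∀ m < n, (rEnum m : ℝ) ∉ cInt f g (rEnum n)) ∧
      Delta f g n = cInt f g (rEnum n)) := by
  unfold Delta
  split_ifs with h
  · exact Or.inr ⟨h, rfl⟩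
  · exact Or.inl rfl

section Final

variable {f g : ℝ → ℝ}
variable (hopen : IsOpen (Eset f g)) (hnp : ∀ x : ℝ, x ≤ 0 → x ∉ Eset f g)

include hopen hnp

lemma cInt_shape {x : ℝ} (hx : x ∈ Eset f g) :
    (∃ b', Aend f g x < b' ∧ b' ∉ Eset f g ∧ cInt f g x = Set.Ioo (Aend f g x) b') ∨
    cInt f g x = Set.Ioi (Aend f g x) := by
  by_cases hB : (Bset f g x).Nonempty
  · left
    refine ⟨sInf (Bset f g x), ?_, (Binf_spec hopen hnp hx hB).2, by unfold cInt; rw [if_pos hB]⟩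
    exact lt_trans (Aend_spec hopen hnp hx).1 (Binf_spec hopen hnp hx hB).1
  · right
    unfold cInt; rw [if_neg hB]

lemma Delta_cover {x : ℝ} (hx : x ∈ Eset f g) : ∃ n, x ∈ Delta f g n := by
  have hA := Aend_spec hopen hnp hx
  obtain ⟨q, hq1, hq2⟩ := exists_rat_btwn hA.1
  have hqmem : (q:ℝ) ∈ cInt f g x := by
    rcases cInt_shape hopen hnp hx with ⟨b', hb1, hb2, hb3⟩ | hb3
    · rw [hb3]
      have hxb : x < b' := by
        have := mem_cInt hopen hnp hx
        rw [hb3] at this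
        exact this.2
      exact ⟨hq1, lt_trans hq2 hxb⟩
    · rw [hb3]; exact hq1
  have hex : ∃ n, (rEnum n : ℝ) ∈ cInt f g x := by
    obtain ⟨n, hn⟩ := rEnum_surj q
    exact ⟨n, by rw [hn]; exact hqmem⟩
  classical
  have hNmem : (rEnum (Nat.find hex) : ℝ) ∈ cInt f g x := Nat.find_spec hex
  have hNE : (rEnum (Nat.find hex) : ℝ) ∈ Eset f g := cInt_sub_E hopen hnp hx hNmem
  have hNeq : cInt f g (rEnum (Nat.find hex)) = cInt f g x := cInt_eq_of_mem hopen hnp hx hNmem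
  have hcond : (rEnum (Nat.find hex) : ℝ) ∈ Eset f g ∧
      ∀ m < Nat.find hex, (rEnum m : ℝ) ∉ cInt f g (rEnum (Nat.find hex)) := by
    refine ⟨hNE, fun m hm => ?_⟩
    rw [hNeq]
    exact Nat.find_min hex hm
  refine ⟨Nat.find hex, ?_⟩
  unfold Delta
  rw [if_pos hcond, hNeq]
  exact mem_cInt hopen hnp hx

lemma Delta_disjoint : ∀ k l, k ≠ l → Disjoint (Delta f g k) (Delta f g l) := by
  have key : ∀ k l, k < l → Disjoint (Delta f g k) (Delta f g l) := by
    intro k l hkl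
    rcases Delta_cases f g k with hk | ⟨⟨hkE, hkmin⟩, hkeq⟩
    · rw [hk]; exact Set.disjoint_left.mpr (fun z hz => absurd hz (Set.notMem_empty z))
    rcases Delta_cases f g l with hl | ⟨⟨hlE, hlmin⟩, hleq⟩
    · rw [hl]; exact Set.disjoint_right.mpr (fun z hz => absurd hz (Set.notMem_empty z))
    rw [hkeq, hleq]
    rcases cInt_disj_or_eq hopen hnp hkE hlE with he | hd
    · exfalso
      apply hlmin k hkl
      rw [← he]
      exact mem_cInt hopen hnp hkE
    · exact hd
  intro k l hkl
  rcases lt_or_gt_of_ne hkl with h | h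
  · exact key k l h
  · exact (key l k h).symm

end Final

end S13

open CSZ MeasureTheory ENNReal Set in
/-- second partition lemma, Lemma 4.4 of the paper.
Let `f, g ∈ L_1 + L_∞` with `f = μ(f)`, `g = μ(g)` and `g ≺≺_hd f`. Then there is a
collection `{Δ_k}` of pairwise disjoint measurable sets such that on each `Δ_k` the
restrictions of `g` and `f` have equal integrals and `g·χ_{Δ_k} ≺≺_hd f·χ_{Δ_k}`, while
`g ≤ f` on the complement of `⋃ Δ_k` in `(0,∞)`. -/
theorem statement13 (f g : ℝ → ℝ)
    (hf : f ∈ sumSet (LpS 1) LinftyS) (hg : g ∈ sumSet (LpS 1) LinftyS)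
    (hfs : ShapeDR f) (hgs : ShapeDR g) (hmaj : HeadMaj g f) :
    ∃ Δ : ℕ → Set ℝ,
      (∀ k, MeasurableSet (Δ k)) ∧
      (∀ k l, k ≠ l → Disjoint (Δ k) (Δ l)) ∧
      (∀ k, (∫⁻ x in Δ k, ENNReal.ofReal (g x) ∂m0 =
               ∫⁻ x in Δ k, ENNReal.ofReal (f x) ∂m0) ∧
            HeadMaj ((Δ k).indicator g) ((Δ k).indicator f)) ∧
      (∀ x ∈ Set.Ioi (0:ℝ) \ ⋃ k, Δ k, g x ≤ f x) := by
  obtain ⟨hf0, hfmono, hfr⟩ := hfs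
  obtain ⟨hg0, hgmono, hgr⟩ := hgs
  have hgm : Measurable g := S13.measurable_of_mem hg
  have hffin : ∀ t, S13.nu f (Set.Iic t) ≠ ⊤ := fun t => S13.nu_Iic_ne_top hf t
  have hgfin : ∀ t, S13.nu g (Set.Iic t) ≠ ⊤ := fun t => S13.nu_Iic_ne_top hg t
  have hgf : ∀ t, S13.nu g (Set.Iic t) ≤ S13.nu f (Set.Iic t) :=
    S13.nu_le_of_headMaj hf0 hfmono hfr hg0 hgmono hgr hmaj
  have hopen : IsOpen (S13.Eset f g) := S13.E_open hffin hgfin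
  have hnp : ∀ x : ℝ, x ≤ 0 → x ∉ S13.Eset f g :=
    fun x hx => S13.not_mem_E_nonpos hgf hffin hx
  refine ⟨S13.Delta f g, ?_, S13.Delta_disjoint hopen hnp, ?_, ?_⟩
  · intro k
    rcases S13.Delta_cases f g k with h | ⟨⟨hkE, _⟩, heq⟩
    · rw [h]; exact MeasurableSet.empty
    · rw [heq]
      rcases S13.cInt_shape hopen hnp hkE with ⟨b', _, _, h3⟩ | h3 <;> rw [h3]
      · exact measurableSet_Ioo
      · exact measurableSet_Ioi
  · intro k
    rcases S13.Delta_cases f g k with h | ⟨⟨hkE, _⟩, heq⟩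
    · rw [h]
      constructor
      · rw [Measure.restrict_empty]
        simp
      · intro t ht
        simp only [Set.indicator_empty]
        exact le_rfl
    · rw [heq]
      have haE := (S13.Aend_spec hopen hnp hkE).2.1
      have ha0 := (S13.Aend_spec hopen hnp hkE).2.2
      have hsubE := S13.cInt_sub_E hopen hnp hkE
      rcases S13.cInt_shape hopen hnp hkE with ⟨b', hb1, hb2, h3⟩ | h3 <;> rw [h3]
      · exact S13.comp_Ioo_ok hf0 hfmono hfr hg0 hgmono hgr hffin hgfin ha0 hb1 haE hb2
          (h3 ▸ hsubE)
      · exact S13.comp_Ioi_ok hf0 hfmono hfr hg0 hgmono hgr hffin hgfin ha0 haE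
          (h3 ▸ hsubE)
  · rintro x ⟨hx0, hxU⟩
    by_contra hc
    push_neg at hc
    have hxE : x ∈ S13.Eset f g :=
      S13.mem_E_of_gt hgm hf0 hfr hgr hffin hgfin hx0 hc
    obtain ⟨n, hn⟩ := S13.Delta_cover hopen hnp hxE
    exact hxU (Set.mem_iUnion.mpr ⟨n, hn⟩)
end
end

section
/- Let a = (a_n)_{n≥0} and b = (b_n)_{n≥0} be two positive decreasing summable sequences such that for every n ≥ 0, Σ_{k≥n} b_k ≤ Σ_{k≥n} a_k (i.e. b ≺≺_tl a). Then there exists a sequence (Δ_n)_{n≥0} of subsets of ℤ_+ such that: (i) for every k ∈ ℤ_+, the number of indices n with k ∈ Δ_n is at most 3; (ii) Σ_{k∈Δ_n} a_k ≥ b_n for every n ∈ ℤ_+. -/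
open Set

noncomputable section

/-- sequence partition lemma, Lemma 6.1 of the paper.
Let `a` and `b` be two positive decreasing summable sequences such that all tail sums of
`b` are dominated by those of `a` (i.e. `b ≺≺_tl a`). Then there is a sequence `(Δ_n)` of
subsets of `ℤ_+` such that every `k ∈ ℤ_+` belongs to at most `3` of the sets `Δ_n`, and
`Σ_{k ∈ Δ_n} a_k ≥ b_n` for every `n`. -/
theorem statement18 (a b : ℕ → ℝ)
    (ha0 : ∀ n, 0 ≤ a n) (hb0 : ∀ n, 0 ≤ b n)
    (hadec : Antitone a) (hbdec : Antitone b)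
    (hasum : Summable a) (hbsum : Summable b)
    (hmaj : ∀ n : ℕ, (∑' k : ℕ, b (n + k)) ≤ ∑' k : ℕ, a (n + k)) :
    ∃ Δ : ℕ → Set ℕ,
      (∀ k : ℕ, {n : ℕ | k ∈ Δ n}.Finite ∧ {n : ℕ | k ∈ Δ n}.ncard ≤ 3) ∧
      (∀ n : ℕ, b n ≤ ∑' k : (Δ n), a k) := by
  classical
  set A : ℕ → ℝ := fun n => ∑' k, a (n + k) with hAdef
  set B : ℕ → ℝ := fun n => ∑' k, b (n + k) with hBdef
  have hAsumm : ∀ n, Summable fun k => a (n + k) := fun n =>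
    ((summable_nat_add_iff n).2 hasum).congr fun m => by rw [add_comm]
  have hBsumm : ∀ n, Summable fun k => b (n + k) := fun n =>
    ((summable_nat_add_iff n).2 hbsum).congr fun m => by rw [add_comm]
  have hArec : ∀ n, A n = a n + A (n + 1) := by
    intro n
    have h := Summable.tsum_eq_zero_add (hAsumm n)
    simp only [add_zero] at h
    calc A n = a n + ∑' k, a (n + (k + 1)) := h
      _ = a n + A (n + 1) := by
          congr 1
          exact tsum_congr fun k => by congr 1; omega
  have hBrec : ∀ n, B n = b n + B (n + 1) := by
    intro n
    have h := Summable.tsum_eq_zero_add (hBsumm n)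
    simp only [add_zero] at h
    calc B n = b n + ∑' k, b (n + (k + 1)) := h
      _ = b n + B (n + 1) := by
          congr 1
          exact tsum_congr fun k => by congr 1; omega
  have hAanti : Antitone A := antitone_nat_of_succ_le fun n => by
    rw [hArec n]; linarith [ha0 n]
  have hBanti : Antitone B := antitone_nat_of_succ_le fun n => by
    rw [hBrec n]; linarith [hb0 n]
  have hA0le : ∀ n, 0 ≤ A n := fun n => tsum_nonneg fun k => ha0 _
  have hB0le : ∀ n, 0 ≤ B n := fun n => tsum_nonneg fun k => hb0 _
  have hBA : ∀ n, B n ≤ A n := hmaj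
  have hAtends : Filter.Tendsto A Filter.atTop (nhds 0) := by
    have h := tendsto_sum_nat_add a
    exact h.congr fun i => tsum_congr fun k => congrArg a (by omega)
  set T : ℕ → Set ℕ := fun n => {k | A (k + 1) < B n ∧ B (n + 1) < A k} with hTdef
  set Δ : ℕ → Set ℕ := fun n => if b n ≤ a n then {n} else T n with hΔdef
  have hmemΔ : ∀ n k, k ∈ Δ n ↔
      ((b n ≤ a n ∧ k = n) ∨ (¬ b n ≤ a n ∧ A (k + 1) < B n ∧ B (n + 1) < A k)) := by
    intro n k
    simp only [hΔdef, hTdef]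
    split_ifs with h
    · simp [h]
    · simp [h, Set.mem_setOf_eq]
  refine ⟨Δ, ?_, ?_⟩
  · -- multiplicity at most 3
    intro k
    have helper : ∀ x y z : ℕ, x < y → y < z →
        B (x + 1) < A k → ¬ b y ≤ a y → A (k + 1) < B z → False := by
      intro x y z hxy hyz hx hy hz
      push_neg at hy
      have h1 : B z ≤ B (y + 1) := hBanti (by omega)
      have h2 : A (k + 1) < B (y + 1) := lt_of_lt_of_le hz h1
      have h3 : y + 1 ≤ k + 1 := by
        by_contra hc
        push_neg at hc
        have h4 : B (y + 1) ≤ B (k + 1) := hBanti (by omega)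
        have h5 := hBA (k + 1)
        linarith
      have h4 : a k ≤ a y := hadec (by omega)
      have h5 : B y ≤ B (x + 1) := hBanti (by omega)
      have h6 := hBrec y
      have h7 := hArec k
      linarith
    set Tk : Set ℕ := {n | ¬ b n ≤ a n ∧ A (k + 1) < B n ∧ B (n + 1) < A k} with hTkdef
    have hU : {n : ℕ | k ∈ Δ n} ⊆ insert k Tk := by
      intro n hn
      simp only [Set.mem_setOf_eq] at hn
      rcases (hmemΔ n k).1 hn with ⟨_, rfl⟩ | ⟨h1, h2, h3⟩
      · exact Set.mem_insert _ _
      · exact Set.mem_insert_of_mem _ ⟨h1, h2, h3⟩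
    have hTk3 : ∀ x y z, x ∈ Tk → y ∈ Tk → z ∈ Tk → x = y ∨ x = z ∨ y = z := by
      intro x y z hx hy hz
      by_contra hcon
      push_neg at hcon
      obtain ⟨hxy, hxz, hyz⟩ := hcon
      simp only [hTkdef, Set.mem_setOf_eq] at hx hy hz
      rcases lt_trichotomy x y with h1 | h1 | h1
      · rcases lt_trichotomy y z with h2 | h2 | h2
        · exact helper x y z h1 h2 hx.2.2 hy.1 hz.2.1
        · exact hyz h2
        · rcases lt_trichotomy x z with h3 | h3 | h3
          · exact helper x z y h3 h2 hx.2.2 hz.1 hy.2.1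
          · exact hxz h3
          · exact helper z x y h3 h1 hz.2.2 hx.1 hy.2.1
      · exact hxy h1
      · rcases lt_trichotomy x z with h2 | h2 | h2
        · exact helper y x z h1 h2 hy.2.2 hx.1 hz.2.1
        · exact hxz h2
        · rcases lt_trichotomy y z with h3 | h3 | h3
          · exact helper y z x h3 h2 hy.2.2 hz.1 hx.2.1
          · exact hyz h3
          · exact helper z y x h3 h1 hz.2.2 hy.1 hx.2.1
    rcases Set.eq_empty_or_nonempty Tk with hTe | ⟨t0, ht0⟩
    · have hsub : {n : ℕ | k ∈ Δ n} ⊆ {k} := by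
        intro n hn
        rcases hU hn with h | h
        · exact h
        · rw [hTe] at h; exact absurd h (Set.notMem_empty n)
      refine ⟨(Set.finite_singleton k).subset hsub, ?_⟩
      calc {n : ℕ | k ∈ Δ n}.ncard ≤ ({k} : Set ℕ).ncard :=
            Set.ncard_le_ncard hsub (Set.finite_singleton k)
        _ ≤ 3 := by simp [Set.ncard_singleton]
    · by_cases h1 : Tk ⊆ {t0}
      · have hsub : {n : ℕ | k ∈ Δ n} ⊆ ({k, t0} : Set ℕ) := by
          intro n hn
          rcases hU hn with h | h
          · exact Or.inl h
          · exact Or.inr (h1 h)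
        have hfin : ({k, t0} : Set ℕ).Finite :=
          (Set.finite_singleton t0).insert k
        refine ⟨hfin.subset hsub, ?_⟩
        calc {n : ℕ | k ∈ Δ n}.ncard ≤ ({k, t0} : Set ℕ).ncard :=
              Set.ncard_le_ncard hsub hfin
          _ ≤ ({t0} : Set ℕ).ncard + 1 := Set.ncard_insert_le _ _
          _ ≤ 3 := by simp [Set.ncard_singleton]
      · obtain ⟨t1, ht1, ht1ne⟩ : ∃ t1 ∈ Tk, t1 ≠ t0 := by
          by_contra hc
          push_neg at hc
          exact h1 fun x hx => hc x hx
        have hTsub : Tk ⊆ ({t0, t1} : Set ℕ) := by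
          intro t ht
          rcases hTk3 t t0 t1 ht ht0 ht1 with h | h | h
          · exact Or.inl h
          · exact Or.inr h
          · exact absurd h.symm ht1ne
        have hsub : {n : ℕ | k ∈ Δ n} ⊆ ({k, t0, t1} : Set ℕ) := by
          intro n hn
          rcases hU hn with h | h
          · exact Or.inl h
          · exact Or.inr (hTsub h)
        have hfin : ({k, t0, t1} : Set ℕ).Finite :=
          (((Set.finite_singleton t1).insert t0).insert k)
        refine ⟨hfin.subset hsub, ?_⟩
        calc {n : ℕ | k ∈ Δ n}.ncard ≤ ({k, t0, t1} : Set ℕ).ncard :=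
              Set.ncard_le_ncard hsub hfin
          _ ≤ ({t0, t1} : Set ℕ).ncard + 1 := Set.ncard_insert_le _ _
          _ ≤ (({t1} : Set ℕ).ncard + 1) + 1 := by
              exact Nat.add_le_add_right (Set.ncard_insert_le _ _) 1
          _ ≤ 3 := by simp [Set.ncard_singleton]
  · -- coverage
    intro n
    by_cases hn : b n ≤ a n
    · have : Δ n = ({n} : Set ℕ) := by rw [hΔdef]; simp [hn]
      rw [this, tsum_singleton]
      exact hn
    · have hΔT : Δ n = T n := by rw [hΔdef]; simp [hn]
      push_neg at hn
      have hbpos : 0 < b n := lt_of_le_of_lt (ha0 n) hn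
      have hBpos : 0 < B n := by
        have h1 := hBrec n
        have h2 := hB0le (n + 1)
        linarith
      have hex : ∃ k, A (k + 1) < B n := by
        obtain ⟨i, hi⟩ := (hAtends.eventually_lt_const hBpos).exists
        exact ⟨i, lt_of_le_of_lt (hAanti (Nat.le_succ i)) hi⟩
      set k1 := Nat.find hex with hk1def
      have hk1spec : A (k1 + 1) < B n := Nat.find_spec hex
      have hk1min : B n ≤ A k1 := by
        rcases Nat.eq_zero_or_pos k1 with h | h
        · rw [h]
          exact le_trans (hBanti (Nat.zero_le n)) (hBA 0)
        · have hm := Nat.find_min hex (show k1 - 1 < k1 by omega)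
          push_neg at hm
          have : k1 - 1 + 1 = k1 := by omega
          rwa [this] at hm
      have hmemT : ∀ k, k ∈ T n ↔ k1 ≤ k ∧ B (n + 1) < A k := by
        intro k
        simp only [hTdef, Set.mem_setOf_eq]
        constructor
        · rintro ⟨h1, h2⟩
          refine ⟨?_, h2⟩
          by_contra hc
          push_neg at hc
          exact (Nat.find_min hex hc) h1
        · rintro ⟨h1, h2⟩
          exact ⟨lt_of_le_of_lt (hAanti (by omega)) hk1spec, h2⟩
      by_cases hfin : ∃ k, A k ≤ B (n + 1)
      · set k2 := Nat.find hfin with hk2def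
        have hk2spec : A k2 ≤ B (n + 1) := Nat.find_spec hfin
        have hk2min : ∀ j, j < k2 → B (n + 1) < A j := by
          intro j hj
          have := Nat.find_min hfin hj
          push_neg at this
          exact this
        have hk1k2 : k1 < k2 := by
          by_contra hc
          push_neg at hc
          have h1 : A k1 ≤ A k2 := hAanti hc
          have h2 := hBrec n
          have h3 := hB0le (n + 1)
          linarith
        have hTeq : T n = ↑(Finset.Ico k1 k2) := by
          ext k
          rw [hmemT k]
          simp only [Finset.coe_Ico, Set.mem_Ico]
          constructor
          · rintro ⟨h1, h2⟩
            refine ⟨h1, ?_⟩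
            by_contra hc
            push_neg at hc
            exact absurd (le_trans (hAanti hc) hk2spec) (not_le.2 h2)
          · rintro ⟨h1, h2⟩
            exact ⟨h1, hk2min k h2⟩
        rw [hΔT, hTeq, Finset.tsum_subtype']
        have htel : ∀ m, (∑ j ∈ Finset.Ico k1 (k1 + m), a j) = A k1 - A (k1 + m) := by
          intro m
          induction m with
          | zero => simp
          | succ m ih =>
            rw [← add_assoc, Finset.sum_Ico_succ_top (by omega), ih, hArec (k1 + m)]
            ring
        have hsum := htel (k2 - k1)
        rw [show k1 + (k2 - k1) = k2 by omega] at hsum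
        rw [hsum]
        have h2 := hBrec n
        linarith
      · push_neg at hfin
        have hTeq : T n = Set.range (fun j => k1 + j) := by
          ext k
          rw [hmemT k]
          simp only [Set.mem_range]
          constructor
          · rintro ⟨h1, _⟩
            exact ⟨k - k1, by omega⟩
          · rintro ⟨j, rfl⟩
            exact ⟨by omega, hfin _⟩
        rw [hΔT, hTeq, tsum_range (fun k => a k) (add_right_injective k1)]
        have hAk1 : (∑' j, a (k1 + j)) = A k1 := rfl
        rw [hAk1]
        have h2 := hBrec n
        have h3 := hB0le (n + 1)
        linarith

end
end
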